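/- For the Basset equation s + α·s^{q1} + γ = 0 with 0 < q1 < 1 and γ > 0, the characteristic equation has a pair of purely imaginary roots s = ±iδ (δ > 0) if and only if α = α*(γ, q1) := -γ^{1-q1}·(cot(q1π/2))^{q1}·sec(q1π/2). -/

import Mathlib

open Real Complex

lemma aux_cpow_pos (δ q : ℝ) (hδ : 0 < δ) :
    (Complex.I * δ) ^ (q:ℂ) = (δ ^ q : ℝ) * (Real.cos (q*Real.pi/2) + Real.sin (q*Real.pi/2) * Complex.I) := by
  have hz : (Complex.I * δ : ℂ) ≠ 0 := by
    simp [Complex.ext_iff, hδ.ne']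
  have harg : Complex.arg (Complex.I * δ) = Real.pi / 2 := by
    rw [Complex.arg_eq_pi_div_two_iff]
    simp [hδ]
  have habs : ‖(Complex.I * δ : ℂ)‖ = δ := by
    simp [abs_of_pos hδ]
  have hlog : Complex.log (Complex.I * δ) = (Real.log δ : ℂ) + (Real.pi/2 : ℝ) * Complex.I := by
    rw [Complex.log, habs, harg]
  rw [Complex.cpow_def_of_ne_zero hz, hlog, add_mul, Complex.exp_add]
  rw [show ((Real.pi/2:ℝ):ℂ) * Complex.I * q = ((q*Real.pi/2 : ℝ):ℂ) * Complex.I by push_cast; ring,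
    Complex.exp_mul_I]
  rw [show ((Real.log δ : ℝ):ℂ) * q = ((Real.log δ * q : ℝ):ℂ) by push_cast; ring,
    ← Complex.ofReal_exp, ← Real.rpow_def_of_pos hδ]
  simp

lemma aux_cpow_neg (δ q : ℝ) (hδ : 0 < δ) :
    (-(Complex.I * δ)) ^ (q:ℂ) = (δ ^ q : ℝ) * (Real.cos (q*Real.pi/2) - Real.sin (q*Real.pi/2) * Complex.I) := by
  have hz : (-(Complex.I * δ) : ℂ) ≠ 0 := by
    simp [Complex.ext_iff, hδ.ne']
  have harg : Complex.arg (-(Complex.I * δ)) = -(Real.pi / 2) := by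
    rw [Complex.arg_eq_neg_pi_div_two_iff]
    simp [hδ]
  have habs : ‖(-(Complex.I * δ) : ℂ)‖ = δ := by
    simp [abs_of_pos hδ]
  have hlog : Complex.log (-(Complex.I * δ)) = (Real.log δ : ℂ) - (Real.pi/2 : ℝ) * Complex.I := by
    rw [Complex.log, habs, harg]; push_cast; ring
  rw [Complex.cpow_def_of_ne_zero hz, hlog,
    show (((Real.log δ:ℝ):ℂ) - ((Real.pi/2 : ℝ):ℂ) * Complex.I) * q
      = ((Real.log δ * q : ℝ):ℂ) + ((-(q*Real.pi/2):ℝ):ℂ) * Complex.I by push_cast; ring,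
    Complex.exp_add, Complex.exp_mul_I, ← Complex.ofReal_exp, ← Real.rpow_def_of_pos hδ]
  push_cast
  simp [Real.cos_neg, Real.sin_neg]
  tauto

lemma aux_re_im (x y : ℝ) : (x:ℂ) + (y:ℝ)*Complex.I = 0 ↔ x = 0 ∧ y = 0 := by
  constructor
  · intro h
    have hre := congrArg Complex.re h
    have him := congrArg Complex.im h
    simp at hre him
    exact ⟨hre, him⟩
  · rintro ⟨hx, hy⟩; simp [hx, hy]

theorem stmt_19 (q1 γ α : ℝ) (h1 : 0 < q1) (h2 : q1 < 1) (hγ : 0 < γ) :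
    (∃ δ : ℝ, 0 < δ ∧
        (Complex.I * δ) + (α : ℂ) * (Complex.I * δ) ^ (q1 : ℂ) + (γ : ℂ) = 0 ∧
        (-(Complex.I * δ)) + (α : ℂ) * (-(Complex.I * δ)) ^ (q1 : ℂ) + (γ : ℂ) = 0) ↔
      α = -γ ^ (1 - q1) * (Real.cot (q1 * Real.pi / 2)) ^ q1 * (Real.cos (q1 * Real.pi / 2))⁻¹ := by
  set θ := q1 * Real.pi / 2 with hθdef
  have hπ := Real.pi_pos
  have hθ0 : 0 < θ := by positivity
  have hθ2 : θ < Real.pi / 2 := by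
    rw [hθdef]; nlinarith
  have hc : 0 < Real.cos θ := Real.cos_pos_of_mem_Ioo ⟨by linarith, hθ2⟩
  have hs : 0 < Real.sin θ := Real.sin_pos_of_pos_of_lt_pi hθ0 (by linarith)
  have ht : 0 < Real.tan θ := by rw [Real.tan_eq_sin_div_cos]; positivity
  have hsin : Real.sin θ = Real.tan θ * Real.cos θ := by
    rw [Real.tan_eq_sin_div_cos]; field_simp
  have hcot : Real.cot θ = (Real.tan θ)⁻¹ := by
    rw [Real.cot_eq_cos_div_sin, Real.tan_eq_sin_div_cos, inv_div]
  have e1 : Real.cot θ ^ q1 = (Real.tan θ ^ q1)⁻¹ := by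
    rw [hcot, Real.inv_rpow ht.le]
  have e2 : γ ^ (1 - q1) = γ / γ ^ q1 := by
    rw [Real.rpow_sub hγ, Real.rpow_one]
  have hiff1 : ∀ δ : ℝ, 0 < δ →
      ((Complex.I * δ) + (α : ℂ) * (Complex.I * δ) ^ (q1 : ℂ) + (γ : ℂ) = 0 ↔
        (α * δ ^ q1 * Real.cos θ + γ = 0 ∧ δ + α * δ ^ q1 * Real.sin θ = 0)) := by
    intro δ hδ
    rw [aux_cpow_pos δ q1 hδ,
      show (Complex.I * δ) + (α:ℂ) * ((δ^q1:ℝ) * ((Real.cos (q1*Real.pi/2):ℝ) + (Real.sin (q1*Real.pi/2):ℝ)*Complex.I)) + (γ:ℂ)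
        = ((α * δ^q1 * Real.cos θ + γ : ℝ):ℂ) + ((δ + α * δ^q1 * Real.sin θ : ℝ):ℂ)*Complex.I by
          rw [hθdef]; push_cast; ring,
      aux_re_im]
  have hiff2 : ∀ δ : ℝ, 0 < δ →
      ((-(Complex.I * δ)) + (α : ℂ) * (-(Complex.I * δ)) ^ (q1 : ℂ) + (γ : ℂ) = 0 ↔
        (α * δ ^ q1 * Real.cos θ + γ = 0 ∧ -(δ + α * δ ^ q1 * Real.sin θ) = 0)) := by
    intro δ hδ
    rw [aux_cpow_neg δ q1 hδ,
      show (-(Complex.I * δ)) + (α:ℂ) * ((δ^q1:ℝ) * ((Real.cos (q1*Real.pi/2):ℝ) - (Real.sin (q1*Real.pi/2):ℝ)*Complex.I)) + (γ:ℂ)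
        = ((α * δ^q1 * Real.cos θ + γ : ℝ):ℂ) + ((-(δ + α * δ^q1 * Real.sin θ) : ℝ):ℂ)*Complex.I by
          rw [hθdef]; push_cast; ring,
      aux_re_im]
  constructor
  · rintro ⟨δ, hδ, he1, he2⟩
    obtain ⟨hre, him⟩ := (hiff1 δ hδ).1 he1
    have hr : 0 < δ ^ q1 := Real.rpow_pos_of_pos hδ q1
    have h3 : δ * Real.cos θ = γ * Real.sin θ := by
      linear_combination Real.cos θ * him - Real.sin θ * hre
    have hδeq : δ = γ * Real.tan θ := by
      rw [Real.tan_eq_sin_div_cos]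
      field_simp
      linarith [h3]
    have hα : α = -γ / (δ ^ q1 * Real.cos θ) := by
      field_simp
      linarith [hre]
    rw [hα, hδeq, Real.mul_rpow hγ.le ht.le, e1, e2]
    have h4 : γ ^ q1 ≠ 0 := (Real.rpow_pos_of_pos hγ q1).ne'
    have h5 : Real.tan θ ^ q1 ≠ 0 := (Real.rpow_pos_of_pos ht q1).ne'
    field_simp
  · intro hα
    refine ⟨γ * Real.tan θ, by positivity, ?_, ?_⟩
    · rw [hiff1 _ (by positivity)]
      have key : α * (γ * Real.tan θ) ^ q1 * Real.cos θ = -γ := by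
        rw [hα, Real.mul_rpow hγ.le ht.le, e1, e2]
        have h4 : γ ^ q1 ≠ 0 := (Real.rpow_pos_of_pos hγ q1).ne'
        have h5 : Real.tan θ ^ q1 ≠ 0 := (Real.rpow_pos_of_pos ht q1).ne'
        field_simp
      constructor
      · linear_combination key
      · rw [hsin]; linear_combination Real.tan θ * key
    · rw [hiff2 _ (by positivity)]
      have key : α * (γ * Real.tan θ) ^ q1 * Real.cos θ = -γ := by
        rw [hα, Real.mul_rpow hγ.le ht.le, e1, e2]
        have h4 : γ ^ q1 ≠ 0 := (Real.rpow_pos_of_pos hγ q1).ne'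
        have h5 : Real.tan θ ^ q1 ≠ 0 := (Real.rpow_pos_of_pos ht q1).ne'
        field_simp
      constructor
      · linear_combination key
      · rw [hsin]; linear_combination -(Real.tan θ) * key
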